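/- (Davis–Kahan sin θ bound) Let M and M̃ be symmetric d×d real matrices with top-k eigenspaces spanned by orthonormal U_k and Ũ_k respectively. Let δ_k = min{|σ_k(M) − σ_j(M̃)| : j ≥ k+1}, where σ_j denotes the j-th largest eigenvalue. If δ_k > 0, then ‖U_kU_kᵀ − Ũ_kŨ_kᵀ‖₂ ≤ ‖M − M̃‖₂ / δ_k. -/

import Mathlib

open Matrix Finset
open scoped Matrix.Norms.L2Operator

/-- Spectral (operator) norm of a real matrix. -/
noncomputable def specNorm {a b : ℕ} (A : Matrix (Fin a) (Fin b) ℝ) : ℝ :=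
  ‖LinearMap.toContinuousLinearMap (Matrix.toEuclideanLin A)‖

lemma specNorm_eq {a b : ℕ} (A : Matrix (Fin a) (Fin b) ℝ) : specNorm A = ‖A‖ := rfl

noncomputable def env {n : ℕ} (x : Fin n → ℝ) : ℝ := Real.sqrt (x ⬝ᵥ x)

lemma dot_self_nonneg {n : ℕ} (x : Fin n → ℝ) : 0 ≤ x ⬝ᵥ x :=
  Finset.sum_nonneg fun i _ => mul_self_nonneg _

lemma env_nonneg {n : ℕ} (x : Fin n → ℝ) : 0 ≤ env x := Real.sqrt_nonneg _

lemma env_sq {n : ℕ} (x : Fin n → ℝ) : env x ^ 2 = x ⬝ᵥ x := by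
  rw [env, Real.sq_sqrt (dot_self_nonneg x)]

lemma env_eq_norm {n : ℕ} (x : Fin n → ℝ) :
    env x = ‖(WithLp.equiv 2 (Fin n → ℝ)).symm x‖ := by
  rw [EuclideanSpace.norm_eq, env]
  congr 1
  simp [dotProduct, sq]

lemma dot_le_env_mul_env {n : ℕ} (x y : Fin n → ℝ) : x ⬝ᵥ y ≤ env x * env y := by
  have h := real_inner_le_norm ((WithLp.equiv 2 (Fin n → ℝ)).symm x)
    ((WithLp.equiv 2 (Fin n → ℝ)).symm y)
  rw [← env_eq_norm, ← env_eq_norm] at h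
  refine le_trans (le_of_eq ?_) h
  simp [PiLp.inner_apply, dotProduct, RCLike.inner_apply]
  exact Finset.sum_congr rfl fun i _ => mul_comm _ _

lemma env_mulVec_le {a b : ℕ} (A : Matrix (Fin a) (Fin b) ℝ) (x : Fin b → ℝ) :
    env (A *ᵥ x) ≤ specNorm A * env x := by
  rw [specNorm_eq, env_eq_norm, env_eq_norm]
  exact A.l2_opNorm_mulVec ((WithLp.equiv 2 (Fin b → ℝ)).symm x)

lemma specNorm_le_bound {a b : ℕ} (A : Matrix (Fin a) (Fin b) ℝ) {c : ℝ} (hc : 0 ≤ c)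
    (h : ∀ x : Fin b → ℝ, env (A *ᵥ x) ≤ c * env x) : specNorm A ≤ c := by
  rw [specNorm_eq, l2_opNorm_def]
  apply ContinuousLinearMap.opNorm_le_bound _ hc
  intro x
  have := h ((WithLp.equiv 2 (Fin b → ℝ)) x)
  rw [env_eq_norm, env_eq_norm] at this
  simp at this
  exact this

lemma specNorm_nonneg {a b : ℕ} (A : Matrix (Fin a) (Fin b) ℝ) : 0 ≤ specNorm A := by
  rw [specNorm_eq]; exact norm_nonneg A

section
variable {d k : ℕ}

-- submatrix with injective column map of orthogonal-ish matrix
lemma orth_submatrix {X : Matrix (Fin d) (Fin d) ℝ} (hX : Xᵀ * X = 1)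
    {f : Fin k → Fin d} (hf : Function.Injective f) :
    (X.submatrix id f)ᵀ * (X.submatrix id f) = 1 := by
  have h1 : (X.submatrix id f)ᵀ = Xᵀ.submatrix f id := by
    ext i j; simp [transpose_apply, submatrix_apply]
  rw [h1, show (Xᵀ.submatrix f id) = Xᵀ.submatrix f (Equiv.refl (Fin d)) from rfl,
    show (X.submatrix id f) = X.submatrix (⇑(Equiv.refl (Fin d))) f from rfl,
    submatrix_mul_equiv, hX]
  ext i j
  simp only [submatrix_apply, one_apply]
  simp [hf.eq_iff]

-- X * diagonal w * Xᵀ acting on submatrix of columns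
lemma diag_mul_submatrix {X : Matrix (Fin d) (Fin d) ℝ} (hX : Xᵀ * X = 1)
    (w : Fin d → ℝ) {f : Fin k → Fin d} (hf : Function.Injective f) :
    (X * Matrix.diagonal w * Xᵀ) * (X.submatrix id f)
      = (X.submatrix id f) * Matrix.diagonal (w ∘ f) := by
  have h2 : Xᵀ * (X.submatrix id f) = (1 : Matrix (Fin d) (Fin d) ℝ).submatrix id f := by
    rw [show (X.submatrix id f) = X.submatrix (⇑(Equiv.refl (Fin d))) f from rfl,
      show Xᵀ = Xᵀ.submatrix id (⇑(Equiv.refl (Fin d))) from rfl, submatrix_mul_equiv, hX]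
  have h3 : Matrix.diagonal w * ((1 : Matrix (Fin d) (Fin d) ℝ).submatrix id f)
      = ((1 : Matrix (Fin d) (Fin d) ℝ).submatrix id f) * Matrix.diagonal (w ∘ f) := by
    ext i j
    simp only [mul_apply, submatrix_apply, diagonal_apply, one_apply, id, ite_mul, mul_ite,
      zero_mul, mul_zero, mul_one, one_mul, Finset.sum_ite_eq, Finset.sum_ite_eq',
      Finset.mem_univ, if_true]
    by_cases h : i = f j <;> simp [h]
  have h4 : X * ((1 : Matrix (Fin d) (Fin d) ℝ).submatrix id f) = X.submatrix id f := by
    ext i j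
    simp only [mul_apply, submatrix_apply, one_apply, id, mul_ite, mul_one, mul_zero,
      Finset.sum_ite_eq', Finset.mem_univ, if_true]
  calc (X * Matrix.diagonal w * Xᵀ) * (X.submatrix id f)
      = X * (Matrix.diagonal w * (Xᵀ * (X.submatrix id f))) := by
        simp only [Matrix.mul_assoc]
    _ = X * (((1 : Matrix (Fin d) (Fin d) ℝ).submatrix id f) * Matrix.diagonal (w ∘ f)) := by
        rw [h2, h3]
    _ = (X.submatrix id f) * Matrix.diagonal (w ∘ f) := by rw [← Matrix.mul_assoc, h4]

end

lemma dot_mulVec_left {m n : ℕ} (A : Matrix (Fin m) (Fin n) ℝ) (x : Fin n → ℝ) (y : Fin m → ℝ) :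
    (A *ᵥ x) ⬝ᵥ y = x ⬝ᵥ (Aᵀ *ᵥ y) := by
  rw [dotProduct_comm, Matrix.dotProduct_mulVec, dotProduct_comm]
  congr 1
  rw [← Matrix.vecMul_transpose, Matrix.transpose_transpose]

lemma sum_split {d k : ℕ} (hkd : k ≤ d) (f : Fin d → ℝ) :
    ∑ i, f i = (∑ i : Fin k, f (Fin.castLE hkd i))
      + ∑ j : Fin (d - k), f ⟨k + j.val, by omega⟩ := by
  set g : ℕ → ℝ := fun i => if h : i < d then f ⟨i, h⟩ else 0 with hg
  calc ∑ i, f i = ∑ i : Fin d, g i.val := by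
        refine Finset.sum_congr rfl fun i _ => ?_
        simp only [g, i.isLt, dif_pos, Fin.eta]
    _ = ∑ i ∈ Finset.range d, g i := Fin.sum_univ_eq_sum_range g d
    _ = ∑ i ∈ Finset.range (k + (d - k)), g i := by
        have h : k + (d - k) = d := by omega
        rw [h]
    _ = (∑ i ∈ Finset.range k, g i) + ∑ i ∈ Finset.range (d - k), g (k + i) :=
        Finset.sum_range_add g k (d - k)
    _ = _ := by
        rw [← Fin.sum_univ_eq_sum_range (fun i => g i) k,
          ← Fin.sum_univ_eq_sum_range (fun i => g (k + i)) (d - k)]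
        congr 1
        · refine Finset.sum_congr rfl fun i _ => ?_
          have hi : (i : ℕ) < d := by omega
          simp only [g, hi, dif_pos]
          rfl
        · refine Finset.sum_congr rfl fun j _ => ?_
          have hj : k + (j : ℕ) < d := by omega
          simp only [g, hj, dif_pos]

lemma rayleigh_max {n : ℕ} (hn : 0 < n) (U : Matrix (Fin n) (Fin n) ℝ) (w : Fin n → ℝ)
    (hU : Uᵀ * U = 1) :
    ∃ (c : ℝ) (v : Fin n → ℝ), v ⬝ᵥ v = 1 ∧ (U * Matrix.diagonal w * Uᵀ) *ᵥ v = c • v ∧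
      ∀ x : Fin n → ℝ, x ⬝ᵥ ((U * Matrix.diagonal w * Uᵀ) *ᵥ x) ≤ c * (x ⬝ᵥ x) := by
  obtain ⟨i₀, -, hmax⟩ := Finset.exists_max_image Finset.univ w ⟨⟨0, hn⟩, Finset.mem_univ _⟩
  have hUU : U * Uᵀ = 1 := mul_eq_one_comm.mp hU
  have hyy : ∀ x : Fin n → ℝ, (Uᵀ *ᵥ x) ⬝ᵥ (Uᵀ *ᵥ x) = x ⬝ᵥ x := by
    intro x
    rw [dot_mulVec_left, Matrix.transpose_transpose, Matrix.mulVec_mulVec, hUU,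
      Matrix.one_mulVec]
  refine ⟨w i₀, U *ᵥ Pi.single i₀ 1, ?_, ?_, ?_⟩
  · rw [dot_mulVec_left, Matrix.mulVec_mulVec, hU, Matrix.one_mulVec]
    simp [dotProduct, Pi.single_apply]
  · have h1 : (U * Matrix.diagonal w * Uᵀ) * U = U * Matrix.diagonal w := by
      rw [Matrix.mul_assoc, hU, Matrix.mul_one]
    rw [Matrix.mulVec_mulVec, h1, ← Matrix.mulVec_mulVec, Matrix.diagonal_mulVec_single,
      show (Pi.single i₀ (w i₀ * 1) : Fin n → ℝ) = w i₀ • (Pi.single i₀ 1 : Fin n → ℝ) from by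
        ext i; simp [Pi.single_apply], Matrix.mulVec_smul]
  · intro x
    have h2 : x ⬝ᵥ ((U * Matrix.diagonal w * Uᵀ) *ᵥ x)
        = ∑ j, (Uᵀ *ᵥ x) j * (w j * (Uᵀ *ᵥ x) j) := by
      rw [← Matrix.mulVec_mulVec, ← Matrix.mulVec_mulVec, Matrix.dotProduct_mulVec,
        show x ᵥ* U = Uᵀ *ᵥ x from by
          rw [← Matrix.transpose_transpose U, Matrix.vecMul_transpose,
            Matrix.transpose_transpose]]
      simp [dotProduct, Matrix.mulVec_diagonal]
    rw [h2, ← hyy x]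
    have h3 : ∀ j : Fin n, (Uᵀ *ᵥ x) j * (w j * (Uᵀ *ᵥ x) j)
        ≤ w i₀ * ((Uᵀ *ᵥ x) j * (Uᵀ *ᵥ x) j) := by
      intro j
      have := hmax j (Finset.mem_univ j)
      nlinarith [sq_nonneg ((Uᵀ *ᵥ x) j)]
    calc ∑ j, (Uᵀ *ᵥ x) j * (w j * (Uᵀ *ᵥ x) j)
        ≤ ∑ j, w i₀ * ((Uᵀ *ᵥ x) j * (Uᵀ *ᵥ x) j) := Finset.sum_le_sum fun j _ => h3 j
      _ = w i₀ * ((Uᵀ *ᵥ x) ⬝ᵥ (Uᵀ *ᵥ x)) := by rw [dotProduct, Finset.mul_sum]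
lemma eig_max {n : ℕ} (hn : 0 < n) (G : Matrix (Fin n) (Fin n) ℝ) (hG : Gᵀ = G) :
    ∃ (c : ℝ) (v : Fin n → ℝ), v ⬝ᵥ v = 1 ∧ G *ᵥ v = c • v ∧
      ∀ x : Fin n → ℝ, x ⬝ᵥ (G *ᵥ x) ≤ c * (x ⬝ᵥ x) := by
  have hherm : G.IsHermitian := by
    rw [Matrix.IsHermitian]
    ext i j
    simpa [Matrix.conjTranspose_apply] using congrFun (congrFun hG i) j
  set U : Matrix (Fin n) (Fin n) ℝ := (hherm.eigenvectorUnitary : Matrix (Fin n) (Fin n) ℝ)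
    with hUdef
  have hstar : star U = Uᵀ := by
    ext i j; simp [Matrix.star_apply]
  have hU : Uᵀ * U = 1 := by
    rw [← hstar]
    exact Matrix.mem_unitaryGroup_iff'.mp hherm.eigenvectorUnitary.2
  have hdecomp : G = U * Matrix.diagonal hherm.eigenvalues * Uᵀ := by
    have h := hherm.spectral_theorem
    rw [Unitary.conjStarAlgAut_apply, ← hUdef, hstar] at h
    simpa using h
  rw [hdecomp]
  exact rayleigh_max hn U _ hU

lemma eig_min {n : ℕ} (hn : 0 < n) (G : Matrix (Fin n) (Fin n) ℝ) (hG : Gᵀ = G) :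
    ∃ (c : ℝ) (v : Fin n → ℝ), v ⬝ᵥ v = 1 ∧ G *ᵥ v = c • v ∧
      ∀ x : Fin n → ℝ, c * (x ⬝ᵥ x) ≤ x ⬝ᵥ (G *ᵥ x) := by
  obtain ⟨c, v, hv, hev, hray⟩ := eig_max hn (-G) (by rw [Matrix.transpose_neg, hG])
  refine ⟨-c, v, hv, ?_, ?_⟩
  · have := hev
    rw [Matrix.neg_mulVec] at this
    have h2 : G *ᵥ v = -(c • v) := by rw [← this]; simp
    rw [h2, ← neg_smul]
  · intro x
    have := hray x
    rw [Matrix.neg_mulVec, dotProduct_neg] at this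
    linarith

lemma specNorm_transpose {a b : ℕ} (A : Matrix (Fin a) (Fin b) ℝ) :
    specNorm Aᵀ = specNorm A := by
  rw [specNorm_eq, specNorm_eq, show Aᵀ = Aᴴ from by ext i j; simp [conjTranspose_apply]]
  exact l2_opNorm_conjTranspose A

lemma dot_mulVec_same {m n : ℕ} (A : Matrix (Fin m) (Fin n) ℝ) (x y : Fin n → ℝ) :
    (A *ᵥ x) ⬝ᵥ (A *ᵥ y) = x ⬝ᵥ ((Aᵀ * A) *ᵥ y) := by
  rw [dot_mulVec_left, Matrix.mulVec_mulVec]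

lemma env_iso {d k : ℕ} {X : Matrix (Fin d) (Fin k) ℝ} (hX : Xᵀ * X = 1) (x : Fin k → ℝ) :
    env (X *ᵥ x) = env x := by
  unfold env
  rw [dot_mulVec_same, hX, Matrix.one_mulVec]

lemma env_coiso {d k : ℕ} {X : Matrix (Fin d) (Fin k) ℝ} (hX : Xᵀ * X = 1) (y : Fin d → ℝ) :
    env (Xᵀ *ᵥ y) ≤ env y := by
  have h : (Xᵀ *ᵥ y) ⬝ᵥ (Xᵀ *ᵥ y) ≤ env y * env (Xᵀ *ᵥ y) :=
    calc (Xᵀ *ᵥ y) ⬝ᵥ (Xᵀ *ᵥ y) = y ⬝ᵥ (X *ᵥ (Xᵀ *ᵥ y)) := by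
          rw [dot_mulVec_left, Matrix.transpose_transpose]
    _ ≤ env y * env (X *ᵥ (Xᵀ *ᵥ y)) := dot_le_env_mul_env _ _
    _ = env y * env (Xᵀ *ᵥ y) := by rw [env_iso hX]
  rcases le_or_gt (env (Xᵀ *ᵥ y)) 0 with h0 | h0
  · exact le_trans h0 (env_nonneg y)
  · have h2 := env_sq (Xᵀ *ᵥ y)
    nlinarith

lemma specNorm_sq_attained {m k : ℕ} (hk : 0 < k) (S : Matrix (Fin m) (Fin k) ℝ) :
    ∃ (c : ℝ) (v : Fin k → ℝ), 0 ≤ c ∧ v ⬝ᵥ v = 1 ∧ (Sᵀ * S) *ᵥ v = c • v ∧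
      specNorm S = Real.sqrt c := by
  have hsym : (Sᵀ * S)ᵀ = Sᵀ * S := by
    rw [Matrix.transpose_mul, Matrix.transpose_transpose]
  obtain ⟨c, v, hv, hev, hray⟩ := eig_max hk (Sᵀ * S) hsym
  have hdot : ∀ x : Fin k → ℝ, (S *ᵥ x) ⬝ᵥ (S *ᵥ x) = x ⬝ᵥ ((Sᵀ * S) *ᵥ x) :=
    fun x => dot_mulVec_same S x x
  have hc : (S *ᵥ v) ⬝ᵥ (S *ᵥ v) = c := by
    rw [hdot, hev, dotProduct_smul, smul_eq_mul, hv, mul_one]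
  have hc0 : 0 ≤ c := hc ▸ dot_self_nonneg _
  refine ⟨c, v, hc0, hv, hev, le_antisymm ?_ ?_⟩
  · refine specNorm_le_bound S (Real.sqrt_nonneg c) fun x => ?_
    have h1 : (S *ᵥ x) ⬝ᵥ (S *ᵥ x) ≤ c * (x ⬝ᵥ x) := by rw [hdot]; exact hray x
    calc env (S *ᵥ x) = Real.sqrt ((S *ᵥ x) ⬝ᵥ (S *ᵥ x)) := rfl
      _ ≤ Real.sqrt (c * (x ⬝ᵥ x)) := Real.sqrt_le_sqrt h1
      _ = Real.sqrt c * env x := by rw [Real.sqrt_mul hc0]; rfl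
  · have h2 : env (S *ᵥ v) ≤ specNorm S * env v := env_mulVec_le S v
    have h3 : env v = 1 := by rw [env, hv, Real.sqrt_one]
    have h4 : env (S *ᵥ v) = Real.sqrt c := by rw [env, hc]
    rw [h3, mul_one] at h2
    rw [← h4]; exact h2

lemma specNorm_unit_lower {m k : ℕ} (S : Matrix (Fin m) (Fin k) ℝ) {v : Fin k → ℝ}
    (hv : v ⬝ᵥ v = 1) : env (S *ᵥ v) ≤ specNorm S := by
  have h2 := env_mulVec_le S v
  rwa [show env v = 1 from by rw [env, hv, Real.sqrt_one], mul_one] at h2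

lemma sylvester {m k : ℕ} (hk : 0 < k) (S : Matrix (Fin m) (Fin k) ℝ) (d₁ : Fin k → ℝ)
    (d₂ : Fin m → ℝ) (t δ : ℝ) (h₁ : ∀ i, t ≤ d₁ i) (h₂ : ∀ j, d₂ j ≤ t - δ) :
    specNorm S * δ ≤ specNorm (S * Matrix.diagonal d₁ - Matrix.diagonal d₂ * S) := by
  obtain ⟨c, v, hc0, hv, hev, hnorm⟩ := specNorm_sq_attained hk S
  rcases eq_or_lt_of_le hc0 with hc | hc
  · rw [hnorm, ← hc, Real.sqrt_zero, zero_mul]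
    exact specNorm_nonneg _
  set σ := Real.sqrt c with hσ
  have hσpos : 0 < σ := Real.sqrt_pos.mpr hc
  have hσsq : σ * σ = c := Real.mul_self_sqrt hc0
  set u : Fin m → ℝ := σ⁻¹ • (S *ᵥ v) with hu
  have hSv : S *ᵥ v = σ • u := by
    rw [hu, smul_smul, mul_inv_cancel₀ (ne_of_gt hσpos), one_smul]
  have hSvdot : (S *ᵥ v) ⬝ᵥ (S *ᵥ v) = c := by
    rw [dot_mulVec_same, hev, dotProduct_smul, smul_eq_mul, hv, mul_one]
  have hu1 : u ⬝ᵥ u = 1 := by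
    rw [hu, smul_dotProduct, dotProduct_smul, hSvdot, smul_eq_mul, smul_eq_mul]
    field_simp
    nlinarith [hσsq]
  have hStu : Sᵀ *ᵥ u = σ • v := by
    rw [hu, Matrix.mulVec_smul, Matrix.mulVec_mulVec, hev, smul_smul]
    congr 1
    field_simp
    nlinarith [hσsq]
  have key1 : u ⬝ᵥ ((S * Matrix.diagonal d₁) *ᵥ v) ≥ σ * t := by
    rw [← Matrix.mulVec_mulVec, dotProduct_comm, dot_mulVec_left, hStu]
    have : (Matrix.diagonal d₁ *ᵥ v) ⬝ᵥ (σ • v) = σ * ∑ i, d₁ i * (v i * v i) := by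
      rw [dotProduct_smul, smul_eq_mul]
      congr 1
      simp only [dotProduct, Matrix.mulVec_diagonal]
      exact Finset.sum_congr rfl fun i _ => by ring
    rw [this]
    have hsum : ∑ i, d₁ i * (v i * v i) ≥ t * (v ⬝ᵥ v) := by
      rw [dotProduct, Finset.mul_sum]
      refine Finset.sum_le_sum fun i _ => ?_
      nlinarith [mul_self_nonneg (v i), h₁ i]
    rw [hv] at hsum
    nlinarith
  have key2 : u ⬝ᵥ ((Matrix.diagonal d₂ * S) *ᵥ v) ≤ σ * (t - δ) := by
    rw [← Matrix.mulVec_mulVec, hSv, Matrix.mulVec_smul, dotProduct_smul, smul_eq_mul]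
    have : u ⬝ᵥ (Matrix.diagonal d₂ *ᵥ u) = ∑ j, d₂ j * (u j * u j) := by
      simp only [dotProduct, Matrix.mulVec_diagonal]
      exact Finset.sum_congr rfl fun j _ => by ring
    rw [this]
    have hsum : ∑ j, d₂ j * (u j * u j) ≤ (t - δ) * (u ⬝ᵥ u) := by
      rw [dotProduct, Finset.mul_sum]
      refine Finset.sum_le_sum fun j _ => ?_
      nlinarith [mul_self_nonneg (u j), h₂ j]
    rw [hu1, mul_one] at hsum
    nlinarith
  have hq : σ * δ ≤ u ⬝ᵥ ((S * Matrix.diagonal d₁ - Matrix.diagonal d₂ * S) *ᵥ v) := by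
    rw [Matrix.sub_mulVec, dotProduct_sub]
    linarith
  have hq2 : u ⬝ᵥ ((S * Matrix.diagonal d₁ - Matrix.diagonal d₂ * S) *ᵥ v)
      ≤ specNorm (S * Matrix.diagonal d₁ - Matrix.diagonal d₂ * S) := by
    calc u ⬝ᵥ ((S * Matrix.diagonal d₁ - Matrix.diagonal d₂ * S) *ᵥ v)
        ≤ env u * env ((S * Matrix.diagonal d₁ - Matrix.diagonal d₂ * S) *ᵥ v) :=
          dot_le_env_mul_env _ _
      _ ≤ 1 * specNorm (S * Matrix.diagonal d₁ - Matrix.diagonal d₂ * S) := by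
          rw [show env u = 1 from by rw [env, hu1, Real.sqrt_one], one_mul, one_mul]
          exact specNorm_unit_lower _ hv
      _ = _ := one_mul _
  rw [hnorm]
  linarith

lemma swap_min {k : ℕ} (hk : 0 < k) (C : Matrix (Fin k) (Fin k) ℝ) :
    ∃ (c : ℝ) (y : Fin k → ℝ), 0 ≤ c ∧ y ⬝ᵥ y = 1 ∧
      (∀ x, c * (x ⬝ᵥ x) ≤ (C *ᵥ x) ⬝ᵥ (C *ᵥ x)) ∧ (Cᵀ *ᵥ y) ⬝ᵥ (Cᵀ *ᵥ y) ≤ c := by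
  have hsym : (Cᵀ * C)ᵀ = Cᵀ * C := by
    rw [Matrix.transpose_mul, Matrix.transpose_transpose]
  obtain ⟨c, v, hv, hev, hray⟩ := eig_min hk (Cᵀ * C) hsym
  have hdot : ∀ x : Fin k → ℝ, (C *ᵥ x) ⬝ᵥ (C *ᵥ x) = x ⬝ᵥ ((Cᵀ * C) *ᵥ x) :=
    fun x => dot_mulVec_same C x x
  have hc : (C *ᵥ v) ⬝ᵥ (C *ᵥ v) = c := by
    rw [hdot, hev, dotProduct_smul, smul_eq_mul, hv, mul_one]
  have hc0 : 0 ≤ c := hc ▸ dot_self_nonneg _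
  have hmin : ∀ x, c * (x ⬝ᵥ x) ≤ (C *ᵥ x) ⬝ᵥ (C *ᵥ x) := fun x => by
    rw [hdot]; exact hray x
  rcases eq_or_lt_of_le hc0 with hceq | hcpos
  · -- c = 0 : C is singular, so Cᵀ has nontrivial kernel
    have hCv : C *ᵥ v = 0 := by
      have : (C *ᵥ v) ⬝ᵥ (C *ᵥ v) = 0 := by rw [hc, ← hceq]
      exact dotProduct_self_eq_zero.mp this
    have hvne : v ≠ 0 := by
      intro h; rw [h] at hv; simp at hv
    have hdet : C.det = 0 := (Matrix.exists_mulVec_eq_zero_iff).mp ⟨v, hvne, hCv⟩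
    have hdetT : Cᵀ.det = 0 := by rw [Matrix.det_transpose]; exact hdet
    obtain ⟨y₀, hy₀ne, hy₀⟩ := (Matrix.exists_mulVec_eq_zero_iff).mpr hdetT
    have hy₀pos : 0 < y₀ ⬝ᵥ y₀ :=
      lt_of_le_of_ne (dot_self_nonneg _) (Ne.symm (fun h => hy₀ne (dotProduct_self_eq_zero.mp h)))
    refine ⟨c, (Real.sqrt (y₀ ⬝ᵥ y₀))⁻¹ • y₀, hc0, ?_, hmin, ?_⟩
    · rw [smul_dotProduct, dotProduct_smul, smul_eq_mul, smul_eq_mul]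
      have hss := Real.mul_self_sqrt (le_of_lt hy₀pos)
      have hs : 0 < Real.sqrt (y₀ ⬝ᵥ y₀) := Real.sqrt_pos.mpr hy₀pos
      field_simp
      rw [sq, hss]
    · rw [Matrix.mulVec_smul, hy₀]
      simp [← hceq]
  · -- c > 0
    set σ := Real.sqrt c with hσ
    have hσpos : 0 < σ := Real.sqrt_pos.mpr hcpos
    have hσsq : σ * σ = c := Real.mul_self_sqrt hc0
    refine ⟨c, σ⁻¹ • (C *ᵥ v), hc0, ?_, hmin, ?_⟩
    · rw [smul_dotProduct, dotProduct_smul, hc, smul_eq_mul, smul_eq_mul]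
      field_simp
      nlinarith [hσsq, Real.mul_self_sqrt hc0]
    · rw [Matrix.mulVec_smul, Matrix.mulVec_mulVec, hev, smul_smul, smul_dotProduct,
        dotProduct_smul, smul_eq_mul, smul_eq_mul, hv]
      have hinv : σ⁻¹ * c = σ := by
        rw [← hσsq]; field_simp
      have h : σ⁻¹ * c * (σ⁻¹ * c * 1) = c := by
        rw [mul_one, hinv, hσsq]
      rw [h]

lemma norm_swap {k m m' : ℕ} (hk : 0 < k) (C : Matrix (Fin k) (Fin k) ℝ)
    (T : Matrix (Fin m) (Fin k) ℝ) (S : Matrix (Fin m') (Fin k) ℝ)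
    (hT : ∀ x, (C *ᵥ x) ⬝ᵥ (C *ᵥ x) + (T *ᵥ x) ⬝ᵥ (T *ᵥ x) = x ⬝ᵥ x)
    (hS : ∀ y, (Cᵀ *ᵥ y) ⬝ᵥ (Cᵀ *ᵥ y) + (S *ᵥ y) ⬝ᵥ (S *ᵥ y) = y ⬝ᵥ y) :
    specNorm T ≤ specNorm S := by
  obtain ⟨c, y, hc0, hy, hmin, hcy⟩ := swap_min hk C
  have hc1 : c ≤ 1 := by
    have h1 := hmin y
    have h2 := hT y
    rw [hy] at h1 h2
    nlinarith [dot_self_nonneg (T *ᵥ y)]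
  have hupper : specNorm T ≤ Real.sqrt (1 - c) := by
    refine specNorm_le_bound T (Real.sqrt_nonneg _) fun x => ?_
    have h1 : (T *ᵥ x) ⬝ᵥ (T *ᵥ x) ≤ (1 - c) * (x ⬝ᵥ x) := by
      have := hT x
      have := hmin x
      nlinarith
    calc env (T *ᵥ x) = Real.sqrt ((T *ᵥ x) ⬝ᵥ (T *ᵥ x)) := rfl
      _ ≤ Real.sqrt ((1 - c) * (x ⬝ᵥ x)) := Real.sqrt_le_sqrt h1
      _ = Real.sqrt (1 - c) * env x := by rw [Real.sqrt_mul (by linarith)]; rfl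
  have hlower : Real.sqrt (1 - c) ≤ specNorm S := by
    have h1 : 1 - c ≤ (S *ᵥ y) ⬝ᵥ (S *ᵥ y) := by
      have := hS y
      rw [hy] at this
      nlinarith
    have h2 : Real.sqrt (1 - c) ≤ env (S *ᵥ y) := Real.sqrt_le_sqrt h1
    exact le_trans h2 (specNorm_unit_lower S hy)
  linarith

lemma orth_submatrix_disjoint {d k l : ℕ} {X : Matrix (Fin d) (Fin d) ℝ} (hX : Xᵀ * X = 1)
    {f : Fin k → Fin d} {g : Fin l → Fin d} (hfg : ∀ i j, f i ≠ g j) :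
    (X.submatrix id f)ᵀ * (X.submatrix id g) = 0 := by
  have h1 : (X.submatrix id f)ᵀ = Xᵀ.submatrix f id := by
    ext i j; simp [transpose_apply, submatrix_apply]
  rw [h1, show (Xᵀ.submatrix f id) = Xᵀ.submatrix f (⇑(Equiv.refl (Fin d))) from rfl,
    show (X.submatrix id g) = X.submatrix (⇑(Equiv.refl (Fin d))) g from rfl,
    submatrix_mul_equiv, hX]
  ext i j
  simp [submatrix_apply, one_apply, hfg i j]

lemma resolution {d k : ℕ} (hkd : k ≤ d) (X : Matrix (Fin d) (Fin d) ℝ) (hX : Xᵀ * X = 1) :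
    (X.submatrix id (Fin.castLE hkd)) * (X.submatrix id (Fin.castLE hkd))ᵀ
      + (X.submatrix id (fun j : Fin (d - k) => (⟨k + j.val, by omega⟩ : Fin d)))
        * (X.submatrix id (fun j : Fin (d - k) => (⟨k + j.val, by omega⟩ : Fin d)))ᵀ = 1 := by
  have hXX : X * Xᵀ = 1 := mul_eq_one_comm.mp hX
  rw [← hXX]
  ext x y
  simp only [Matrix.add_apply, Matrix.mul_apply, Matrix.transpose_apply, Matrix.submatrix_apply,
    id]
  exact (sum_split hkd (fun l => X x l * X y l)).symm

set_option maxHeartbeats 1000000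

/-- **Davis–Kahan `sin θ` theorem.** Let `M, M̃` be symmetric `d × d`
matrices, orthogonally diagonalized as `M = V diag(μ) Vᵀ` and `M̃ = Ṽ diag(ν) Ṽᵀ` with
eigenvalues `μ, ν` in decreasing order.  Let `U_k, Ũ_k` be the first `k` columns of
`V, Ṽ` (spanning the top-`k` eigenspaces), and let
`δ_k = inf { |σ_k(M) − σ_j(M̃)| : j ≥ k + 1 }` (1-indexed; `σ_k(M) = μ (k−1)` 0-indexed).
If `δ_k > 0`, then `‖U_k U_kᵀ − Ũ_k Ũ_kᵀ‖₂ ≤ ‖M − M̃‖₂ / δ_k`. -/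
theorem davis_kahan_sin_theta {d k : ℕ} (hk : 0 < k) (hkd : k ≤ d)
    (M Mt : Matrix (Fin d) (Fin d) ℝ)
    (μ ν : Fin d → ℝ) (hμ : Antitone μ) (hν : Antitone ν)
    (V Vt : Matrix (Fin d) (Fin d) ℝ)
    (hV : Vᵀ * V = 1) (hVt : Vtᵀ * Vt = 1)
    (hMdiag : M = V * Matrix.diagonal μ * Vᵀ)
    (hMtdiag : Mt = Vt * Matrix.diagonal ν * Vtᵀ)
    (Uk Utk : Matrix (Fin d) (Fin k) ℝ)
    (hUk : Uk = V.submatrix id (Fin.castLE hkd))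
    (hUtk : Utk = Vt.submatrix id (Fin.castLE hkd))
    (δ : ℝ)
    (hδ : δ = sInf {c : ℝ | ∃ j : Fin d, k ≤ (j : ℕ) ∧
      c = |μ ⟨k - 1, by omega⟩ - ν j|})
    (hδpos : 0 < δ) :
    specNorm (Uk * Ukᵀ - Utk * Utkᵀ) ≤ specNorm (M - Mt) / δ := by
  have hkd' : k < d := by
    rcases lt_or_eq_of_le hkd with h | h
    · exact h
    · exfalso
      have hempty : {c : ℝ | ∃ j : Fin d, k ≤ (j : ℕ) ∧
          c = |μ ⟨k - 1, by omega⟩ - ν j|} = ∅ := by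
        ext c
        simp only [Set.mem_setOf_eq, Set.mem_empty_iff_false, iff_false, not_exists]
        rintro j ⟨hj, -⟩
        omega
      rw [hδ, hempty, Real.sInf_empty] at hδpos
      exact lt_irrefl 0 hδpos
  set κ : Fin d := ⟨k - 1, by omega⟩ with hκ
  have hδle : ∀ j : Fin d, k ≤ (j : ℕ) → δ ≤ |μ κ - ν j| := by
    intro j hj
    rw [hδ]
    refine csInf_le ⟨0, ?_⟩ ⟨j, hj, rfl⟩
    rintro c ⟨j', _, rfl⟩
    exact abs_nonneg _
  set e : Fin (d - k) → Fin d := fun j => (⟨k + j.val, by omega⟩ : Fin d) with he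
  have he_inj : Function.Injective e := by
    intro i j hij
    have h := congrArg Fin.val hij
    simp only [he] at h
    exact Fin.ext (by omega)
  have hcast_inj : Function.Injective (Fin.castLE hkd) := fun i j hij =>
    Fin.ext (by simpa using congrArg Fin.val hij)
  set W : Matrix (Fin d) (Fin (d - k)) ℝ := Vt.submatrix id e with hW
  set W' : Matrix (Fin d) (Fin (d - k)) ℝ := V.submatrix id e with hW'
  set S : Matrix (Fin (d - k)) (Fin k) ℝ := Wᵀ * Uk with hS
  set T : Matrix (Fin (d - k)) (Fin k) ℝ := W'ᵀ * Utk with hT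
  set C : Matrix (Fin k) (Fin k) ℝ := Ukᵀ * Utk with hC
  have hUkO : Ukᵀ * Uk = 1 := by rw [hUk]; exact orth_submatrix hV hcast_inj
  have hUtkO : Utkᵀ * Utk = 1 := by rw [hUtk]; exact orth_submatrix hVt hcast_inj
  have hWO : Wᵀ * W = 1 := orth_submatrix hVt he_inj
  have hW'O : W'ᵀ * W' = 1 := orth_submatrix hV he_inj
  have hPres : Uk * Ukᵀ + W' * W'ᵀ = 1 := by
    rw [hUk, hW', he]; exact resolution hkd V hV
  have hQres : Utk * Utkᵀ + W * Wᵀ = 1 := by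
    rw [hUtk, hW, he]; exact resolution hkd Vt hVt
  have hMUk : M * Uk = Uk * Matrix.diagonal (μ ∘ Fin.castLE hkd) := by
    rw [hMdiag, hUk]; exact diag_mul_submatrix hV μ hcast_inj
  have hMtW : Mt * W = W * Matrix.diagonal (ν ∘ e) := by
    rw [hMtdiag, hW]; exact diag_mul_submatrix hVt ν he_inj
  have hMtsym : Mtᵀ = Mt := by
    rw [hMtdiag]
    simp only [Matrix.transpose_mul, Matrix.transpose_transpose, Matrix.diagonal_transpose]
    rw [Matrix.mul_assoc]
  have hWMt : Wᵀ * Mt = Matrix.diagonal (ν ∘ e) * Wᵀ := by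
    have h := congrArg Matrix.transpose hMtW
    simp only [Matrix.transpose_mul, hMtsym, Matrix.diagonal_transpose] at h
    exact h
  have hWEU : Wᵀ * (M - Mt) * Uk
      = S * Matrix.diagonal (μ ∘ Fin.castLE hkd) - Matrix.diagonal (ν ∘ e) * S := by
    rw [Matrix.mul_sub, Matrix.sub_mul]
    congr 1
    · rw [Matrix.mul_assoc, hMUk, ← Matrix.mul_assoc, ← hS]
    · rw [hWMt, Matrix.mul_assoc, ← hS, ← Matrix.mul_assoc]
  have hcompress : specNorm (Wᵀ * (M - Mt) * Uk) ≤ specNorm (M - Mt) := by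
    refine specNorm_le_bound _ (specNorm_nonneg _) fun x => ?_
    have h1 : (Wᵀ * (M - Mt) * Uk) *ᵥ x = Wᵀ *ᵥ ((M - Mt) *ᵥ (Uk *ᵥ x)) := by
      rw [← Matrix.mulVec_mulVec, ← Matrix.mulVec_mulVec]
    rw [h1]
    calc env (Wᵀ *ᵥ ((M - Mt) *ᵥ (Uk *ᵥ x))) ≤ env ((M - Mt) *ᵥ (Uk *ᵥ x)) :=
          env_coiso hWO _
      _ ≤ specNorm (M - Mt) * env (Uk *ᵥ x) := env_mulVec_le _ _
      _ = specNorm (M - Mt) * env x := by rw [env_iso hUkO]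
  have hCT : ∀ x : Fin k → ℝ, (C *ᵥ x) ⬝ᵥ (C *ᵥ x) + (T *ᵥ x) ⬝ᵥ (T *ᵥ x) = x ⬝ᵥ x := by
    intro x
    have hmat : Cᵀ * C + Tᵀ * T = 1 := by
      rw [hC, hT]
      simp only [Matrix.transpose_mul, Matrix.transpose_transpose]
      calc Utkᵀ * Uk * (Ukᵀ * Utk) + Utkᵀ * W' * (W'ᵀ * Utk)
          = Utkᵀ * (Uk * Ukᵀ + W' * W'ᵀ) * Utk := by
            rw [Matrix.mul_add, Matrix.add_mul]
            simp only [Matrix.mul_assoc]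
        _ = 1 := by rw [hPres, Matrix.mul_one, hUtkO]
    rw [dot_mulVec_same, dot_mulVec_same, ← dotProduct_add, ← Matrix.add_mulVec, hmat,
      Matrix.one_mulVec]
  have hCS : ∀ y : Fin k → ℝ, (Cᵀ *ᵥ y) ⬝ᵥ (Cᵀ *ᵥ y) + (S *ᵥ y) ⬝ᵥ (S *ᵥ y) = y ⬝ᵥ y := by
    intro y
    have hmat : C * Cᵀ + Sᵀ * S = 1 := by
      rw [hC, hS]
      simp only [Matrix.transpose_mul, Matrix.transpose_transpose]
      calc Ukᵀ * Utk * (Utkᵀ * Uk) + Ukᵀ * W * (Wᵀ * Uk)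
          = Ukᵀ * (Utk * Utkᵀ + W * Wᵀ) * Uk := by
            rw [Matrix.mul_add, Matrix.add_mul]
            simp only [Matrix.mul_assoc]
        _ = 1 := by rw [hQres, Matrix.mul_one, hUkO]
    have h1 := dot_mulVec_same Cᵀ y y
    rw [Matrix.transpose_transpose] at h1
    rw [h1, dot_mulVec_same, ← dotProduct_add, ← Matrix.add_mulVec, hmat, Matrix.one_mulVec]
  have hTleS : specNorm T ≤ specNorm S := norm_swap hk C T S hCT hCS
  have master : ∀ a : ℝ, 0 ≤ a → specNorm S ≤ a → specNorm T ≤ a →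
      specNorm (Uk * Ukᵀ - Utk * Utkᵀ) ≤ a := by
    intro a ha haS haT
    refine specNorm_le_bound _ ha fun x => ?_
    have hid : Uk * Ukᵀ - Utk * Utkᵀ
        = (1 - Utk * Utkᵀ) * (Uk * Ukᵀ) - (Utk * Utkᵀ) * (1 - Uk * Ukᵀ) := by
      noncomm_ring
    have h1mQ : (1 : Matrix (Fin d) (Fin d) ℝ) - Utk * Utkᵀ = W * Wᵀ := by
      rw [← hQres]; abel
    have h1mP : (1 : Matrix (Fin d) (Fin d) ℝ) - Uk * Ukᵀ = W' * W'ᵀ := by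
      rw [← hPres]; abel
    set u₁ : Fin d → ℝ := W *ᵥ (S *ᵥ (Ukᵀ *ᵥ x)) with hu₁
    set u₂ : Fin d → ℝ := Utk *ᵥ (Tᵀ *ᵥ (W'ᵀ *ᵥ x)) with hu₂
    have hdiff : (Uk * Ukᵀ - Utk * Utkᵀ) *ᵥ x = u₁ - u₂ := by
      rw [hid, Matrix.sub_mulVec]
      congr 1
      · rw [h1mQ, hu₁, hS]
        rw [show W * Wᵀ * (Uk * Ukᵀ) = W * ((Wᵀ * Uk) * Ukᵀ) from by
          simp only [Matrix.mul_assoc], ← Matrix.mulVec_mulVec, ← Matrix.mulVec_mulVec]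
      · rw [h1mP, hu₂, hT]
        have hTt : (W'ᵀ * Utk)ᵀ = Utkᵀ * W' := by
          rw [Matrix.transpose_mul, Matrix.transpose_transpose]
        rw [hTt]
        rw [show Utk * Utkᵀ * (W' * W'ᵀ) = Utk * ((Utkᵀ * W') * W'ᵀ) from by
          simp only [Matrix.mul_assoc], ← Matrix.mulVec_mulVec, ← Matrix.mulVec_mulVec]
    have hWUtk : Wᵀ * Utk = 0 := by
      rw [hW, hUtk]
      refine orth_submatrix_disjoint hVt fun i j hij => ?_
      have h := congrArg Fin.val hij
      have h1 : (e i : ℕ) = k + (i : ℕ) := rfl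
      have h2 : ((Fin.castLE hkd j : Fin d) : ℕ) = (j : ℕ) := rfl
      omega
    have horth : u₁ ⬝ᵥ u₂ = 0 := by
      have hzero : Wᵀ *ᵥ (Utk *ᵥ (Tᵀ *ᵥ (W'ᵀ *ᵥ x))) = 0 := by
        rw [Matrix.mulVec_mulVec, hWUtk, Matrix.zero_mulVec]
      rw [hu₁, hu₂, dot_mulVec_left, hzero, dotProduct_zero]
    have hb₁ : env u₁ ≤ a * env (Ukᵀ *ᵥ x) := by
      rw [hu₁, env_iso hWO]
      calc env (S *ᵥ (Ukᵀ *ᵥ x)) ≤ specNorm S * env (Ukᵀ *ᵥ x) := env_mulVec_le _ _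
        _ ≤ a * env (Ukᵀ *ᵥ x) := mul_le_mul_of_nonneg_right haS (env_nonneg _)
    have hb₂ : env u₂ ≤ a * env (W'ᵀ *ᵥ x) := by
      rw [hu₂, env_iso hUtkO]
      calc env (Tᵀ *ᵥ (W'ᵀ *ᵥ x)) ≤ specNorm Tᵀ * env (W'ᵀ *ᵥ x) := env_mulVec_le _ _
        _ = specNorm T * env (W'ᵀ *ᵥ x) := by rw [specNorm_transpose]
        _ ≤ a * env (W'ᵀ *ᵥ x) := mul_le_mul_of_nonneg_right haT (env_nonneg _)
    have hpyth : env (Ukᵀ *ᵥ x) ^ 2 + env (W'ᵀ *ᵥ x) ^ 2 = env x ^ 2 := by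
      rw [env_sq, env_sq, env_sq]
      have l1 := dot_mulVec_same Ukᵀ x x
      rw [Matrix.transpose_transpose] at l1
      have l2 := dot_mulVec_same W'ᵀ x x
      rw [Matrix.transpose_transpose] at l2
      rw [l1, l2, ← dotProduct_add, ← Matrix.add_mulVec, hPres, Matrix.one_mulVec]
    have hexp : ((u₁ - u₂) ⬝ᵥ (u₁ - u₂)) = u₁ ⬝ᵥ u₁ + u₂ ⬝ᵥ u₂ - 2 * (u₁ ⬝ᵥ u₂) := by
      rw [sub_dotProduct, dotProduct_sub, dotProduct_sub, dotProduct_comm u₂ u₁]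
      ring
    have hfin : env ((Uk * Ukᵀ - Utk * Utkᵀ) *ᵥ x) ^ 2 ≤ (a * env x) ^ 2 := by
      rw [hdiff, env_sq, hexp, horth]
      have e1 : u₁ ⬝ᵥ u₁ ≤ (a * env (Ukᵀ *ᵥ x)) ^ 2 := by
        rw [← env_sq]
        exact pow_le_pow_left₀ (env_nonneg _) hb₁ 2
      have e2 : u₂ ⬝ᵥ u₂ ≤ (a * env (W'ᵀ *ᵥ x)) ^ 2 := by
        rw [← env_sq]
        exact pow_le_pow_left₀ (env_nonneg _) hb₂ 2
      have e3 : (a * env (Ukᵀ *ᵥ x)) ^ 2 + (a * env (W'ᵀ *ᵥ x)) ^ 2 = (a * env x) ^ 2 := by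
        have : (a * env (Ukᵀ *ᵥ x)) ^ 2 + (a * env (W'ᵀ *ᵥ x)) ^ 2
            = a ^ 2 * (env (Ukᵀ *ᵥ x) ^ 2 + env (W'ᵀ *ᵥ x) ^ 2) := by ring
        rw [this, hpyth]; ring
      linarith
    have h0 : 0 ≤ a * env x := mul_nonneg ha (env_nonneg _)
    calc env ((Uk * Ukᵀ - Utk * Utkᵀ) *ᵥ x)
        = Real.sqrt (env ((Uk * Ukᵀ - Utk * Utkᵀ) *ᵥ x) ^ 2) :=
          (Real.sqrt_sq (env_nonneg _)).symm
      _ ≤ Real.sqrt ((a * env x) ^ 2) := Real.sqrt_le_sqrt hfin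
      _ = a * env x := Real.sqrt_sq h0
  by_cases hcase : ∀ j : Fin (d - k), ν (e j) ≤ μ κ
  · -- well-separated case
    have h₂ : ∀ j : Fin (d - k), (ν ∘ e) j ≤ μ κ - δ := by
      intro j
      have h := hδle (e j) (Nat.le_add_right k (j : ℕ))
      rw [abs_of_nonneg (by linarith [hcase j])] at h
      simp only [Function.comp_apply]
      linarith
    have h₁ : ∀ i : Fin k, μ κ ≤ (μ ∘ Fin.castLE hkd) i := by
      intro i
      apply hμ
      rw [Fin.le_def]
      have h1 : ((Fin.castLE hkd i : Fin d) : ℕ) = (i : ℕ) := rfl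
      have h2 : (κ : ℕ) = k - 1 := rfl
      omega
    have hsyl := sylvester hk S (μ ∘ Fin.castLE hkd) (ν ∘ e) (μ κ) δ h₁ h₂
    rw [← hWEU] at hsyl
    have hSbound : specNorm S ≤ specNorm (M - Mt) / δ := by
      rw [le_div_iff₀ hδpos]
      exact le_trans hsyl hcompress
    exact master _ (div_nonneg (specNorm_nonneg _) hδpos.le) hSbound (le_trans hTleS hSbound)
  · -- crossing case: δ ≤ ‖M - Mt‖, and the left side is at most 1
    push_neg at hcase
    obtain ⟨j₀, hj₀⟩ := hcase
    have hVV : V * Vᵀ = 1 := mul_eq_one_comm.mp hV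
    have hVtVt : Vt * Vtᵀ = 1 := mul_eq_one_comm.mp hVt
    set g : Fin (k + 1) → Fin d := fun i => (⟨i.val, by omega⟩ : Fin d) with hg
    have hg_inj : Function.Injective g := fun i j hij =>
      Fin.ext (by simpa [hg] using congrArg Fin.val hij)
    set A1 : Matrix (Fin d) (Fin (k + 1)) ℝ := Vt.submatrix id g with hA1
    have hA1O : A1ᵀ * A1 = 1 := orth_submatrix hVt hg_inj
    set L : Matrix (Fin k) (Fin (k + 1)) ℝ := Ukᵀ * A1 with hL
    have hnotinj : ¬ Function.Injective (Matrix.mulVecLin L) := by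
      intro hinj
      have h := LinearMap.finrank_le_finrank_of_injective hinj
      simp only [Module.finrank_fin_fun] at h
      omega
    obtain ⟨p, q, hpq, hne⟩ := Function.not_injective_iff.mp hnotinj
    set c0 : Fin (k + 1) → ℝ := p - q with hc0def
    have hc0ne : c0 ≠ 0 := sub_ne_zero.mpr hne
    have hLc0 : L *ᵥ c0 = 0 := by
      have h : Matrix.mulVecLin L (p - q) = 0 := by rw [map_sub, hpq, sub_self]
      simpa [Matrix.mulVecLin_apply] using h
    set x : Fin d → ℝ := A1 *ᵥ c0 with hx
    set z : Fin d → ℝ := Vtᵀ *ᵥ x with hz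
    set y : Fin d → ℝ := Vᵀ *ᵥ x with hy
    have hxx : x ⬝ᵥ x = c0 ⬝ᵥ c0 := by
      rw [hx, dot_mulVec_same, hA1O, Matrix.one_mulVec]
    have hxxpos : 0 < x ⬝ᵥ x := by
      rw [hxx]
      rcases (dot_self_nonneg c0).lt_or_eq with h | h
      · exact h
      · exact absurd (dotProduct_self_eq_zero.mp h.symm) hc0ne
    have hzz : z ⬝ᵥ z = x ⬝ᵥ x := by
      have h := dot_mulVec_same Vtᵀ x x
      rw [Matrix.transpose_transpose, hVtVt, Matrix.one_mulVec] at h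
      rw [hz, h]
    have hyy : y ⬝ᵥ y = x ⬝ᵥ x := by
      have h := dot_mulVec_same Vᵀ x x
      rw [Matrix.transpose_transpose, hVV, Matrix.one_mulVec] at h
      rw [hy, h]
    have hUkx : Ukᵀ *ᵥ x = 0 := by
      rw [hx, Matrix.mulVec_mulVec, ← hL, hLc0]
    have hzsupp : ∀ j : Fin d, k < (j : ℕ) → z j = 0 := by
      intro j hj
      have hVtA1 : Vtᵀ * A1 = (1 : Matrix (Fin d) (Fin d) ℝ).submatrix id g := by
        rw [hA1, show (Vt.submatrix id g) = Vt.submatrix (⇑(Equiv.refl (Fin d))) g from rfl,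
          show Vtᵀ = Vtᵀ.submatrix id (⇑(Equiv.refl (Fin d))) from rfl, submatrix_mul_equiv,
          hVt]
      have hz2 : z = ((1 : Matrix (Fin d) (Fin d) ℝ).submatrix id g) *ᵥ c0 := by
        rw [hz, hx, Matrix.mulVec_mulVec, hVtA1]
      rw [hz2]
      show ∑ i, ((1 : Matrix (Fin d) (Fin d) ℝ).submatrix id g) j i * c0 i = 0
      refine Finset.sum_eq_zero fun i _ => ?_
      rw [Matrix.submatrix_apply, Matrix.one_apply_ne, zero_mul]
      intro hcontra
      have h := congrArg Fin.val hcontra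
      have h' : (j : ℕ) = (i : ℕ) := h
      omega
    have hysupp : ∀ i : Fin d, (i : ℕ) < k → y i = 0 := by
      intro i hik
      have h0 := congrFun hUkx ⟨i.val, hik⟩
      have hcast : (Fin.castLE hkd ⟨i.val, hik⟩ : Fin d) = i := Fin.ext rfl
      simp only [hUk, Pi.zero_apply] at h0
      rw [show ((V.submatrix id (Fin.castLE hkd))ᵀ *ᵥ x) ⟨i.val, hik⟩
          = ∑ l, V l (Fin.castLE hkd ⟨i.val, hik⟩) * x l from by
        simp [Matrix.mulVec, dotProduct, Matrix.transpose_apply, Matrix.submatrix_apply]] at h0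
      rw [hcast] at h0
      rw [hy]
      show ∑ l, Vᵀ i l * x l = 0
      rw [← h0]
      exact Finset.sum_congr rfl fun l _ => by rw [Matrix.transpose_apply]
    have hMtx : x ⬝ᵥ (Mt *ᵥ x) = ∑ j, ν j * (z j * z j) := by
      rw [hMtdiag]
      rw [show (Vt * Matrix.diagonal ν * Vtᵀ) *ᵥ x = Vt *ᵥ (Matrix.diagonal ν *ᵥ z) from by
        rw [hz, ← Matrix.mulVec_mulVec, ← Matrix.mulVec_mulVec]]
      rw [dotProduct_comm, dot_mulVec_left, ← hz]
      simp only [dotProduct, Matrix.mulVec_diagonal]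
      exact Finset.sum_congr rfl fun j _ => by ring
    have hMx : x ⬝ᵥ (M *ᵥ x) = ∑ j, μ j * (y j * y j) := by
      rw [hMdiag]
      rw [show (V * Matrix.diagonal μ * Vᵀ) *ᵥ x = V *ᵥ (Matrix.diagonal μ *ᵥ y) from by
        rw [hy, ← Matrix.mulVec_mulVec, ← Matrix.mulVec_mulVec]]
      rw [dotProduct_comm, dot_mulVec_left, ← hy]
      simp only [dotProduct, Matrix.mulVec_diagonal]
      exact Finset.sum_congr rfl fun j _ => by ring
    have hbound1 : ν ⟨k, hkd'⟩ * (x ⬝ᵥ x) ≤ x ⬝ᵥ (Mt *ᵥ x) := by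
      rw [hMtx, ← hzz, dotProduct, Finset.mul_sum]
      refine Finset.sum_le_sum fun j _ => ?_
      by_cases hj : k < (j : ℕ)
      · rw [hzsupp j hj]; simp
      · have hle : ν ⟨k, hkd'⟩ ≤ ν j := hν (by rw [Fin.le_def]; simpa using le_of_not_gt hj)
        nlinarith [mul_self_nonneg (z j)]
    have hbound2 : x ⬝ᵥ (M *ᵥ x) ≤ μ ⟨k, hkd'⟩ * (x ⬝ᵥ x) := by
      rw [hMx, ← hyy, dotProduct, Finset.mul_sum]
      refine Finset.sum_le_sum fun i _ => ?_
      by_cases hi : (i : ℕ) < k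
      · rw [hysupp i hi]; simp
      · have hle : μ i ≤ μ ⟨k, hkd'⟩ := hμ (by rw [Fin.le_def]; simpa using le_of_not_gt hi)
        nlinarith [mul_self_nonneg (y i)]
    have hCS2 : x ⬝ᵥ ((Mt - M) *ᵥ x) ≤ specNorm (M - Mt) * (x ⬝ᵥ x) := by
      calc x ⬝ᵥ ((Mt - M) *ᵥ x) ≤ env x * env ((Mt - M) *ᵥ x) := dot_le_env_mul_env _ _
        _ ≤ env x * (specNorm (Mt - M) * env x) :=
            mul_le_mul_of_nonneg_left (env_mulVec_le _ _) (env_nonneg _)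
        _ = specNorm (Mt - M) * (env x ^ 2) := by ring
        _ = specNorm (M - Mt) * (x ⬝ᵥ x) := by
            rw [env_sq, show specNorm (Mt - M) = specNorm (M - Mt) from by
              rw [specNorm_eq, specNorm_eq, ← norm_neg (Mt - M), neg_sub]]
    have hdiffdot : x ⬝ᵥ ((Mt - M) *ᵥ x) = x ⬝ᵥ (Mt *ᵥ x) - x ⬝ᵥ (M *ᵥ x) := by
      rw [Matrix.sub_mulVec, dotProduct_sub]
    have hkey : ν ⟨k, hkd'⟩ - μ ⟨k, hkd'⟩ ≤ specNorm (M - Mt) := by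
      have h3 : (ν ⟨k, hkd'⟩ - μ ⟨k, hkd'⟩) * (x ⬝ᵥ x) ≤ specNorm (M - Mt) * (x ⬝ᵥ x) := by
        rw [sub_mul]
        rw [hdiffdot] at hCS2
        linarith
      exact le_of_mul_le_mul_right h3 hxxpos
    have hδE : δ ≤ specNorm (M - Mt) := by
      have ha := hδle (e j₀) (Nat.le_add_right k (j₀ : ℕ))
      rw [abs_of_neg (by linarith : μ κ - ν (e j₀) < 0)] at ha
      have hν2 : ν (e j₀) ≤ ν ⟨k, hkd'⟩ := hν (by
        rw [Fin.le_def]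
        exact Nat.le_add_right k (j₀ : ℕ))
      have hμ2 : μ ⟨k, hkd'⟩ ≤ μ κ := hμ (by
        rw [Fin.le_def]
        exact Nat.sub_le k 1)
      linarith
    have h1le : (1 : ℝ) ≤ specNorm (M - Mt) / δ := (one_le_div hδpos).mpr hδE
    have hS1 : specNorm S ≤ 1 := by
      refine specNorm_le_bound _ zero_le_one fun x' => ?_
      rw [hS, ← Matrix.mulVec_mulVec]
      calc env (Wᵀ *ᵥ (Uk *ᵥ x')) ≤ env (Uk *ᵥ x') := env_coiso hWO _
        _ = env x' := env_iso hUkO x'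
        _ = 1 * env x' := (one_mul _).symm
    have hT1 : specNorm T ≤ 1 := by
      refine specNorm_le_bound _ zero_le_one fun x' => ?_
      rw [hT, ← Matrix.mulVec_mulVec]
      calc env (W'ᵀ *ᵥ (Utk *ᵥ x')) ≤ env (Utk *ᵥ x') := env_coiso hW'O _
        _ = env x' := env_iso hUtkO x'
        _ = 1 * env x' := (one_mul _).symm
    exact le_trans (master 1 zero_le_one hS1 hT1) h1le
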